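/- Fix an integer k ≥ 2 and integers m₁, …, m_k ≥ 0. There exists a constant C = C(k, m₁, …, m_k) > 0 such that for all positive integers N and a, the sum of ∏_{i=1}^k φ²_{n_i, m_i} over all k-tuples of nonnegative integers (n₁, …, n_k) with n₁ + … + n_k = N for which there exist indices i ≠ j with n_i > a and n_j > a, is at most C · (27/2)^N · N^{-5/2} · a^{-3/2}. (Equivalently: the number of triangulations of k disjoint polygons with boundary sizes m₁+2, …, m_k+2 and N internal vertices in total such that at least two of the polygons contain more than a internal vertices each is at most C · (27/2)^N · N^{-5/2} · a^{-3/2}.) -/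

import Mathlib

/-- The number of rooted type II triangulations of a disc with m+2 boundary
vertices and n internal vertices. -/
noncomputable def phi2 (n m : ℕ) : ℝ :=
  (2 ^ (n + 1) * Nat.factorial (2 * m + 1) * Nat.factorial (2 * m + 3 * n) : ℝ) /
    ((Nat.factorial m) ^ 2 * Nat.factorial n * Nat.factorial (2 * m + 2 * n + 2))

open Finset Real

/-- psi n = (n+1)^{-5/2} -/
noncomputable def psi (n : ℕ) : ℝ := ((n : ℝ) + 1) ^ (-(5/2) : ℝ)

lemma psi_pos (n : ℕ) : 0 < psi n :=
  Real.rpow_pos_of_pos (by positivity) _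

-- the choose-ratio identity
lemma choose_ratio (n : ℕ) :
    ((3*n+3).choose (n+1)) * ((n+1)*(2*n+1)*(2*n+2)) =
      ((3*n).choose n) * ((3*n+1)*(3*n+2)*(3*n+3)) := by
  have h1 : ((3*n).choose n) * (Nat.factorial n) * (Nat.factorial (2*n)) = Nat.factorial (3*n) := by
    have := Nat.choose_mul_factorial_mul_factorial (show n ≤ 3*n by omega)
    simpa [show 3*n - n = 2*n by omega] using this
  have h2 : ((3*n+3).choose (n+1)) * (Nat.factorial (n+1)) * (Nat.factorial (2*n+2)) = Nat.factorial (3*n+3) := by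
    have h := Nat.choose_mul_factorial_mul_factorial (show n+1 ≤ 3*n+3 by omega)
    rw [show 3*n+3 - (n+1) = 2*n+2 from by omega] at h
    exact h
  have hpos : 0 < Nat.factorial n * Nat.factorial (2*n) := by positivity
  apply Nat.eq_of_mul_eq_mul_right hpos
  have e1 : Nat.factorial (n+1) = (n+1) * Nat.factorial n := by simp [Nat.factorial_succ]
  have e2 : Nat.factorial (2*n+2) = (2*n+2) * ((2*n+1) * Nat.factorial (2*n)) := by
    have : 2*n+2 = (2*n+1)+1 := by omega
    rw [this, Nat.factorial_succ, Nat.factorial_succ]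
  have e3 : Nat.factorial (3*n+3) = (3*n+3)*((3*n+2)*((3*n+1)*Nat.factorial (3*n))) := by
    rw [show 3*n+3 = (3*n+2)+1 by omega, Nat.factorial_succ,
      show 3*n+2 = (3*n+1)+1 by omega, Nat.factorial_succ, Nat.factorial_succ]
  calc ((3*n+3).choose (n+1)) * ((n+1)*(2*n+1)*(2*n+2)) * (Nat.factorial n * Nat.factorial (2*n))
      = ((3*n+3).choose (n+1)) * (Nat.factorial (n+1)) * (Nat.factorial (2*n+2)) := by
        rw [e1, e2]; ring
    _ = Nat.factorial (3*n+3) := h2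
    _ = ((3*n).choose n) * ((3*n+1)*(3*n+2)*(3*n+3)) * (Nat.factorial n * Nat.factorial (2*n)) := by
        rw [e3, ← h1]; ring

lemma choose_sq_bound (n : ℕ) :
    (((3*n).choose n : ℝ))^2 * ((n:ℝ)+1) * 16^n ≤ 729^n := by
  induction n with
  | zero => norm_num
  | succ n ih =>
    have key := choose_ratio n
    have keyR : (((3*(n+1)).choose (n+1) : ℝ)) * (((n:ℝ)+1)*(2*(n:ℝ)+1)*(2*(n:ℝ)+2)) =
        (((3*n).choose n : ℝ)) * ((3*(n:ℝ)+1)*(3*(n:ℝ)+2)*(3*(n:ℝ)+3)) := by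
      exact_mod_cast congrArg (Nat.cast : ℕ → ℝ) key
    set c : ℝ := ((3*n).choose n : ℝ) with hc
    set d : ℝ := ((3*n+3).choose (n+1) : ℝ) with hd
    have hn : (0:ℝ) ≤ n := Nat.cast_nonneg n
    have hc0 : 0 ≤ c := Nat.cast_nonneg _
    have hd0 : 0 ≤ d := Nat.cast_nonneg _
    -- from keyR : d = c * R
    have h16 : (0:ℝ) < 16^n := by positivity
    -- want : d^2 * (n+2) * 16^(n+1) ≤ 729^(n+1)
    -- we know c^2 * (n+1) * 16^n ≤ 729^n
    -- multiply keyR squared and use polynomial inequality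
    have poly : 16 * (((3*(n:ℝ)+1)*(3*(n:ℝ)+2)*(3*(n:ℝ)+3))^2 * ((n:ℝ)+2)) ≤
        729 * ((((n:ℝ)+1)*(2*(n:ℝ)+1)*(2*(n:ℝ)+2))^2 * ((n:ℝ)+1)) := by
      nlinarith [sq_nonneg ((n:ℝ)), pow_nonneg hn 3, pow_nonneg hn 4, pow_nonneg hn 5, mul_nonneg (mul_nonneg hn hn) hn]
    have hden : (0:ℝ) < (((n:ℝ)+1)*(2*(n:ℝ)+1)*(2*(n:ℝ)+2))^2 := by positivity
    have hd2 : d^2 * (((n:ℝ)+1)*(2*(n:ℝ)+1)*(2*(n:ℝ)+2))^2 =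
        c^2 * ((3*(n:ℝ)+1)*(3*(n:ℝ)+2)*(3*(n:ℝ)+3))^2 := by
      have := congrArg (fun x => x^2) keyR
      rw [show 3*(n+1) = 3*n+3 by ring] at this
      simpa [mul_pow] using this
    -- combine
    have step : d^2 * (((n:ℝ)+1)+1) * 16^(n+1) * (((n:ℝ)+1)*(2*(n:ℝ)+1)*(2*(n:ℝ)+2))^2
        ≤ 729^(n+1) * (((n:ℝ)+1)*(2*(n:ℝ)+1)*(2*(n:ℝ)+2))^2 := by
      have c2n : 0 ≤ c^2 := sq_nonneg c
      calc d^2 * (((n:ℝ)+1)+1) * 16^(n+1) * (((n:ℝ)+1)*(2*(n:ℝ)+1)*(2*(n:ℝ)+2))^2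
          = (16^n) * ((16 * (((3*(n:ℝ)+1)*(3*(n:ℝ)+2)*(3*(n:ℝ)+3))^2 * ((n:ℝ)+2))) * c^2) := by
            rw [show d^2 * (((n:ℝ)+1)+1) * 16^(n+1) * (((n:ℝ)+1)*(2*(n:ℝ)+1)*(2*(n:ℝ)+2))^2
              = (d^2 * (((n:ℝ)+1)*(2*(n:ℝ)+1)*(2*(n:ℝ)+2))^2) * ((((n:ℝ)+1)+1) * 16^(n+1)) by ring, hd2]
            ring
        _ ≤ (16^n) * ((729 * ((((n:ℝ)+1)*(2*(n:ℝ)+1)*(2*(n:ℝ)+2))^2 * ((n:ℝ)+1))) * c^2) := by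
            apply mul_le_mul_of_nonneg_left (mul_le_mul_of_nonneg_right poly c2n) (le_of_lt h16)
        _ = (c^2 * ((n:ℝ)+1) * 16^n) * 729 * (((n:ℝ)+1)*(2*(n:ℝ)+1)*(2*(n:ℝ)+2))^2 := by ring
        _ ≤ (729^n) * 729 * (((n:ℝ)+1)*(2*(n:ℝ)+1)*(2*(n:ℝ)+2))^2 := by
            apply mul_le_mul_of_nonneg_right (mul_le_mul_of_nonneg_right ih (by norm_num)) (le_of_lt hden)
        _ = 729^(n+1) * (((n:ℝ)+1)*(2*(n:ℝ)+1)*(2*(n:ℝ)+2))^2 := by ring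
    have := le_of_mul_le_mul_right (by
      calc d^2 * (((n:ℝ)+1)+1) * 16^(n+1) * (((n:ℝ)+1)*(2*(n:ℝ)+1)*(2*(n:ℝ)+2))^2
          ≤ 729^(n+1) * (((n:ℝ)+1)*(2*(n:ℝ)+1)*(2*(n:ℝ)+2))^2 := step) hden
    rw [show 3*(n+1) = 3*n+3 by ring]
    simpa [Nat.cast_add, Nat.cast_one] using this

lemma choose_bound (n : ℕ) :
    ((3*n).choose n : ℝ) * (((n:ℝ)+1) ^ ((1/2) : ℝ)) ≤ (27/4)^n := by
  have h1 : (0:ℝ) < (n:ℝ)+1 := by positivity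
  have hs : (0:ℝ) ≤ ((n:ℝ)+1) ^ ((1/2) : ℝ) := Real.rpow_nonneg (le_of_lt h1) _
  have hL : (0:ℝ) ≤ ((3*n).choose n : ℝ) * (((n:ℝ)+1) ^ ((1/2) : ℝ)) :=
    mul_nonneg (Nat.cast_nonneg _) hs
  have hR : (0:ℝ) ≤ (27/4:ℝ)^n := by positivity
  rw [← pow_le_pow_iff_left₀ hL hR (two_ne_zero)]
  have hsq : (((n:ℝ)+1) ^ ((1/2) : ℝ))^2 = (n:ℝ)+1 := by
    rw [← Real.rpow_natCast (((n:ℝ)+1) ^ ((1/2) : ℝ)) 2, ← Real.rpow_mul (le_of_lt h1)]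
    norm_num
  have := choose_sq_bound n
  calc (((3*n).choose n : ℝ) * (((n:ℝ)+1) ^ ((1/2) : ℝ)))^2
      = ((3*n).choose n : ℝ)^2 * ((n:ℝ)+1) := by rw [mul_pow, hsq]
    _ ≤ 729^n / 16^n := by
        rw [le_div_iff₀ (by positivity)]
        linarith [choose_sq_bound n]
    _ = ((27/4:ℝ)^n)^2 := by
        rw [← pow_mul, div_pow, pow_mul, pow_mul, ← pow_mul, ← pow_mul, mul_comm n 2, pow_mul, pow_mul]
        norm_num

-- (a+b)! ≤ a! * (a+b)^b
lemma factorial_add_le (a b : ℕ) : Nat.factorial (a+b) ≤ Nat.factorial a * (a+b)^b := by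
  induction b with
  | zero => simp
  | succ b ih =>
    have : Nat.factorial (a+(b+1)) = (a+b+1) * Nat.factorial (a+b) := by
      rw [show a+(b+1) = (a+b)+1 from by ring, Nat.factorial_succ]
    rw [this]
    calc (a+b+1) * Nat.factorial (a+b) ≤ (a+b+1) * (Nat.factorial a * (a+b)^b) :=
          Nat.mul_le_mul_left _ ih
      _ ≤ (a+(b+1)) * (Nat.factorial a * (a+(b+1))^b) := by
          apply Nat.mul_le_mul (by omega)
          exact Nat.mul_le_mul_left _ (Nat.pow_le_pow_left (by omega) b)
      _ = Nat.factorial a * (a+(b+1))^(b+1) := by ring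

-- a! * (a+1)^b ≤ (a+b)!
lemma le_factorial_add (a b : ℕ) : Nat.factorial a * (a+1)^b ≤ Nat.factorial (a+b) := by
  induction b with
  | zero => simp
  | succ b ih =>
    have e : Nat.factorial (a+(b+1)) = (a+b+1) * Nat.factorial (a+b) := by
      rw [show a+(b+1) = (a+b)+1 from by ring, Nat.factorial_succ]
    rw [e]
    calc Nat.factorial a * (a+1)^(b+1) = (a+1) * (Nat.factorial a * (a+1)^b) := by ring
      _ ≤ (a+b+1) * Nat.factorial (a+b) := Nat.mul_le_mul (by omega) ih

lemma phi2_nonneg (n m : ℕ) : 0 ≤ phi2 n m := by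
  unfold phi2; positivity

lemma phi2_bound (m : ℕ) : ∃ B : ℝ, 0 < B ∧ ∀ n, phi2 n m ≤ B * (27/2)^n * psi n := by
  set K : ℝ := (2*(Nat.factorial (2*m+1) : ℝ) * (2*m+3)^(2*m)) /
      ((Nat.factorial m : ℝ)^2 * 2^(2*m+2)) with hK
  have hKpos : 0 < K := by
    apply div_pos <;> positivity
  refine ⟨max (phi2 0 m + 1) (4*K), lt_max_of_lt_right (by positivity), ?_⟩
  intro n
  match n with
  | 0 =>
    have : psi 0 = 1 := by simp [psi]
    rw [this]
    simp only [pow_zero, mul_one]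
    calc phi2 0 m ≤ phi2 0 m + 1 := by linarith
      _ ≤ _ := le_max_left _ _
  | Nat.succ n' =>
    set n := n' + 1 with hn
    have hn1 : 1 ≤ n := by omega
    have hnR : (1:ℝ) ≤ (n:ℝ) := by exact_mod_cast hn1
    have hnpos : (0:ℝ) < n := by linarith
    -- numerator bound in ℕ
    have hnum : Nat.factorial (2*m+3*n) ≤ Nat.factorial (3*n) * ((2*m+3)*n)^(2*m) := by
      calc Nat.factorial (2*m+3*n) = Nat.factorial (3*n + 2*m) := by ring_nf
        _ ≤ Nat.factorial (3*n) * (3*n+2*m)^(2*m) := factorial_add_le (3*n) (2*m)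
        _ ≤ Nat.factorial (3*n) * ((2*m+3)*n)^(2*m) := by
            apply Nat.mul_le_mul_left
            apply Nat.pow_le_pow_left
            nlinarith
    -- denominator bound in ℕ
    have hden : Nat.factorial (2*n) * (2*n)^(2*m+2) ≤ Nat.factorial (2*m+2*n+2) := by
      calc Nat.factorial (2*n) * (2*n)^(2*m+2)
          ≤ Nat.factorial (2*n) * (2*n+1)^(2*m+2) := by
            apply Nat.mul_le_mul_left; apply Nat.pow_le_pow_left; omega
        _ ≤ Nat.factorial (2*n + (2*m+2)) := le_factorial_add (2*n) (2*m+2)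
        _ = Nat.factorial (2*m+2*n+2) := by ring_nf
    set C : ℝ := ((3*n).choose n : ℝ) with hC
    have hch_cast : ((3*n).factorial : ℝ) = C * ((n.factorial : ℝ) * ((2*n).factorial : ℝ)) := by
      have h := Nat.choose_mul_factorial_mul_factorial (show n ≤ 3*n by omega)
      rw [show 3*n - n = 2*n from by omega] at h
      have h2 : (((3*n).choose n : ℝ)) * (n.factorial:ℝ) * ((2*n).factorial:ℝ) = ((3*n).factorial:ℝ) := by
        exact_mod_cast h
      rw [← h2, hC]; ring
    -- step 1: phi2 ≤ Num'/Den'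
    have step1 : phi2 n m ≤
        (2^(n+1)*((2*m+1).factorial:ℝ) * ((((3*n).factorial :ℕ):ℝ) * ((((2*m+3)*n)^(2*m) :ℕ):ℝ))) /
        (((m.factorial:ℝ))^2 * (n.factorial:ℝ) * ((((2*n).factorial:ℕ):ℝ) * (((2*n)^(2*m+2) :ℕ):ℝ))) := by
      unfold phi2
      apply div_le_div₀ (by positivity)
      · have : ((Nat.factorial (2*m+3*n) : ℕ):ℝ) ≤ (((3*n).factorial :ℕ):ℝ) * ((((2*m+3)*n)^(2*m) :ℕ):ℝ) := by
          exact_mod_cast hnum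
        calc (2 ^ (n + 1) * (Nat.factorial (2 * m + 1):ℝ) * (Nat.factorial (2 * m + 3 * n) :ℝ))
            ≤ 2 ^ (n + 1) * (Nat.factorial (2 * m + 1):ℝ) * ((((3*n).factorial :ℕ):ℝ) * ((((2*m+3)*n)^(2*m) :ℕ):ℝ)) := by
              apply mul_le_mul_of_nonneg_left this (by positivity)
          _ = _ := by ring
      · positivity
      · have : (((2*n).factorial:ℕ):ℝ) * (((2*n)^(2*m+2) :ℕ):ℝ) ≤ ((Nat.factorial (2*m+2*n+2) : ℕ):ℝ) := by
          exact_mod_cast hden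
        apply mul_le_mul_of_nonneg_left this (by positivity)
    -- step 2: Num'/Den' = K * 2^n * C / n^2
    have step2 : (2^(n+1)*((2*m+1).factorial:ℝ) * ((((3*n).factorial :ℕ):ℝ) * ((((2*m+3)*n)^(2*m) :ℕ):ℝ))) /
        (((m.factorial:ℝ))^2 * (n.factorial:ℝ) * ((((2*n).factorial:ℕ):ℝ) * (((2*n)^(2*m+2) :ℕ):ℝ)))
        = K * 2^n * C / (n:ℝ)^2 := by
      rw [hK]
      have hf1 : (n.factorial:ℝ) ≠ 0 := by positivity
      have hf2 : (((2*n).factorial:ℕ):ℝ) ≠ 0 := by positivity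
      have hf3 : ((m.factorial:ℕ):ℝ) ≠ 0 := by positivity
      have hnne : (n:ℝ) ≠ 0 := ne_of_gt hnpos
      have e1 : ((((2*m+3)*n)^(2*m) : ℕ) : ℝ) = ((2*(m:ℝ)+3))^(2*m) * ((n:ℝ))^(2*m) := by
        push_cast [mul_pow]; ring
      have e2 : (((2*n)^(2*m+2) : ℕ) : ℝ) = 2^(2*m+2) * (((n:ℝ))^(2*m) * ((n:ℝ))^2) := by
        push_cast [mul_pow, pow_add]; ring
      rw [hch_cast, e1, e2]
      field_simp
      ring
    rw [step2] at step1
    -- step 3: bound C and 1/n^2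
    have hch : C ≤ (27/4)^n * (((n:ℝ)+1) ^ (-(1/2) : ℝ)) := by
      have hb := choose_bound n
      have hp : (0:ℝ) < ((n:ℝ)+1) ^ ((1/2):ℝ) := Real.rpow_pos_of_pos (by positivity) _
      rw [Real.rpow_neg (by positivity), ← div_eq_mul_inv, le_div_iff₀ hp]
      exact hb
    have hCpos : 0 ≤ C := Nat.cast_nonneg _
    have hinv : (1:ℝ)/(n:ℝ)^2 ≤ 4 * (((n:ℝ)+1)^(2:ℕ))⁻¹ := by
      rw [div_le_iff₀ (by positivity)]
      rw [mul_comm 4 _, mul_assoc, inv_mul_eq_div, le_div_iff₀ (by positivity)]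
      nlinarith
    have psi_eq : psi n = (((n:ℝ)+1)^(2:ℕ))⁻¹ * (((n:ℝ)+1) ^ (-(1/2) : ℝ)) := by
      rw [psi, show (-(5/2):ℝ) = (-(2:ℝ)) + (-(1/2)) from by norm_num,
        Real.rpow_add (by positivity)]
      congr 1
      rw [Real.rpow_neg (by positivity), ← Real.rpow_natCast ((n:ℝ)+1) 2]
      norm_num
    -- assemble
    have final : K * 2^n * C / (n:ℝ)^2 ≤ 4*K * (27/2)^n * psi n := by
      rw [div_eq_mul_one_div]
      calc K * 2^n * C * (1/(n:ℝ)^2)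
          ≤ K * 2^n * ((27/4)^n * (((n:ℝ)+1) ^ (-(1/2) : ℝ))) * (4 * (((n:ℝ)+1)^(2:ℕ))⁻¹) := by
            apply mul_le_mul
            · exact mul_le_mul_of_nonneg_left hch (by positivity)
            · exact hinv
            · positivity
            · have : (0:ℝ) ≤ ((n:ℝ)+1) ^ (-(1/2) : ℝ) := Real.rpow_nonneg (by positivity) _
              positivity
        _ = 4*K * (2^n * (27/4)^n) * ((((n:ℝ)+1)^(2:ℕ))⁻¹ * (((n:ℝ)+1) ^ (-(1/2) : ℝ))) := by ring
        _ = 4*K * (27/2)^n * psi n := by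
            rw [psi_eq, ← mul_pow]
            norm_num
    calc phi2 n m ≤ K * 2^n * C / (n:ℝ)^2 := step1
      _ ≤ 4*K * (27/2)^n * psi n := final
      _ ≤ max (phi2 0 m + 1) (4*K) * (27/2)^n * psi n := by
          apply mul_le_mul_of_nonneg_right _ (le_of_lt (Real.rpow_pos_of_pos (by positivity) _))
          apply mul_le_mul_of_nonneg_right (le_max_right _ _) (by positivity)

lemma mvt_step (x : ℝ) (hx : 1 ≤ x) :
    (3/2) * (x+1) ^ (-(5/2):ℝ) ≤ x ^ (-(3/2):ℝ) - (x+1) ^ (-(3/2):ℝ) := by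
  have hx0 : (0:ℝ) < x := by linarith
  have hx1 : (0:ℝ) < x + 1 := by linarith
  set u : ℝ := x ^ ((3/2):ℝ) with hu
  set v : ℝ := (x+1) ^ ((3/2):ℝ) with hv
  have hupos : 0 < u := Real.rpow_pos_of_pos hx0 _
  have hvpos : 0 < v := Real.rpow_pos_of_pos hx1 _
  have hu2 : u^2 = x^3 := by
    rw [hu, ← Real.rpow_natCast (x ^ ((3/2):ℝ)) 2, ← Real.rpow_mul (le_of_lt hx0)]
    norm_num
  have hv2 : v^2 = (x+1)^3 := by
    rw [hv, ← Real.rpow_natCast ((x+1) ^ ((3/2):ℝ)) 2, ← Real.rpow_mul (le_of_lt hx1)]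
    norm_num
  -- key polynomial fact : (x+1) * v ≥ u * (x + 5/2)
  have key : u * (x + 5/2) ≤ (x+1) * v := by
    have hL : 0 ≤ u * (x + 5/2) := by positivity
    have hR : 0 ≤ (x+1) * v := by positivity
    rw [← pow_le_pow_iff_left₀ hL hR (two_ne_zero)]
    rw [mul_pow, mul_pow, hu2, hv2]
    nlinarith [pow_nonneg (le_of_lt hx0) 3, sq_nonneg x, pow_nonneg (le_of_lt hx0) 2]
  have e1 : x ^ (-(3/2):ℝ) = u⁻¹ := by rw [hu, ← Real.rpow_neg (le_of_lt hx0)]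
  have e2 : (x+1) ^ (-(3/2):ℝ) = v⁻¹ := by rw [hv, ← Real.rpow_neg (le_of_lt hx1)]
  have e3 : (x+1) ^ (-(5/2):ℝ) = ((x+1)*v)⁻¹ := by
    have hm : (x+1) * v = (x+1) ^ ((5/2):ℝ) := by
      rw [hv]
      nth_rewrite 1 [show (x+1) = (x+1) ^ ((1:ℝ)) from (Real.rpow_one _).symm]
      rw [← Real.rpow_add hx1]
      norm_num
    rw [hm, ← Real.rpow_neg (le_of_lt hx1)]
  rw [e1, e2, e3]
  have hid : u⁻¹ - v⁻¹ - (3/2) * ((x+1)*v)⁻¹ = ((x+1)*v - u*(x+5/2))/(u*v*(x+1)) := by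
    field_simp
    ring
  have : 0 ≤ ((x+1)*v - u*(x+5/2))/(u*v*(x+1)) := by
    apply div_nonneg (by linarith) (by positivity)
  linarith [hid ▸ this]

lemma tail_sum (a N : ℕ) :
    ∑ n ∈ (Finset.range (N+1)).filter (fun n => a < n), psi n ≤ (2/3) * ((a:ℝ)+1) ^ (-(3/2):ℝ) := by
  have hset : (Finset.range (N+1)).filter (fun n => a < n) = Finset.Ico (a+1) (N+1) := by
    ext x; simp [Finset.mem_filter, Finset.mem_range, Finset.mem_Ico]; omega
  rw [hset, Finset.sum_Ico_eq_sum_range]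
  set L := N + 1 - (a+1) with hL
  set G : ℕ → ℝ := fun i => ((a:ℝ)+1+(i:ℝ)) ^ (-(3/2):ℝ) with hG
  have hstep : ∀ i ∈ Finset.range L, psi (a+1+i) ≤ (2/3) * (G i - G (i+1)) := by
    intro i _
    have hx : (1:ℝ) ≤ (a:ℝ)+1+(i:ℝ) := by
      have : (0:ℝ) ≤ (a:ℝ) := Nat.cast_nonneg a
      have : (0:ℝ) ≤ (i:ℝ) := Nat.cast_nonneg i
      linarith [Nat.cast_nonneg a (α := ℝ)]
    have h := mvt_step ((a:ℝ)+1+(i:ℝ)) hx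
    have e0 : psi (a+1+i) = (((a:ℝ)+1+(i:ℝ))+1) ^ (-(5/2):ℝ) := by
      rw [psi]; push_cast; ring_nf
    have eG : G (i+1) = (((a:ℝ)+1+(i:ℝ))+1) ^ (-(3/2):ℝ) := by
      rw [hG]; push_cast; ring_nf
    rw [e0, eG]
    linarith
  calc ∑ i ∈ Finset.range L, psi (a+1+i)
      ≤ ∑ i ∈ Finset.range L, (2/3) * (G i - G (i+1)) := Finset.sum_le_sum hstep
    _ = (2/3) * ∑ i ∈ Finset.range L, (G i - G (i+1)) := by rw [Finset.mul_sum]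
    _ = (2/3) * (G 0 - G L) := by rw [Finset.sum_range_sub' G]
    _ ≤ (2/3) * G 0 := by
        have : 0 ≤ G L := Real.rpow_nonneg (by positivity) _
        linarith
    _ = (2/3) * ((a:ℝ)+1) ^ (-(3/2):ℝ) := by rw [hG]; norm_num

lemma full_sum (N : ℕ) : ∑ n ∈ Finset.range (N+1), psi n ≤ 2 := by
  have hsplit := Finset.sum_filter_add_sum_filter_not (Finset.range (N+1)) (fun n => 0 < n) psi
  have h1 : ∑ n ∈ (Finset.range (N+1)).filter (fun n => ¬ 0 < n), psi n = psi 0 := by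
    have : (Finset.range (N+1)).filter (fun n => ¬ 0 < n) = {0} := by
      ext x; simp only [Finset.mem_filter, Finset.mem_range, Finset.mem_singleton]; omega
    rw [this, Finset.sum_singleton]
  have h2 := tail_sum 0 N
  have hpsi0 : psi 0 = 1 := by simp [psi]
  have h3 : (2/3 : ℝ) * ((0:ℝ)+1) ^ (-(3/2):ℝ) = 2/3 := by norm_num
  have h2' : ∑ n ∈ (Finset.range (N+1)).filter (fun n => (0:ℕ) < n), psi n ≤ 2/3 := by
    calc ∑ n ∈ (Finset.range (N+1)).filter (fun n => (0:ℕ) < n), psi n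
        ≤ (2/3 : ℝ) * (((0:ℕ):ℝ)+1) ^ (-(3/2):ℝ) := h2
      _ = 2/3 := by norm_num
  rw [← hsplit, h1, hpsi0]
  linarith [h2']

lemma pair_sum_bound (k : ℕ) (hk : 2 ≤ k) (N a : ℕ) (hN : 0 < N) (ha : 0 < a)
    (p q : Fin k) (hpq : p ≠ q)
    (F : Finset (Fin k → ℕ)) (hF : ∀ f ∈ F, (∀ i, f i ∈ Finset.range (N+1)) ∧ ∑ i, f i = N) :
    ∑ f ∈ F.filter (fun f => N ≤ k * f p ∧ a < f q), ∏ i, psi (f i)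
      ≤ ((k:ℝ)^((5/2):ℝ) * (N:ℝ)^(-(5/2):ℝ)) * (2^k * ((a:ℝ)^(-(3/2):ℝ))) := by
  classical
  set F' := F.filter (fun f => N ≤ k * f p ∧ a < f q) with hF'
  set W : (Fin k → ℕ) → ℝ := fun f => ∏ i ∈ Finset.univ.erase p, psi (f i) with hW
  have hWnonneg : ∀ f, 0 ≤ W f := fun f => Finset.prod_nonneg fun i _ => le_of_lt (psi_pos _)
  have hkR : (0:ℝ) < (k:ℝ) := by exact_mod_cast (by omega : 0 < k)
  have hNR : (0:ℝ) < (N:ℝ) := by exact_mod_cast hN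
  have haR : (0:ℝ) < (a:ℝ) := by exact_mod_cast ha
  -- per-element bound
  have hface : ∀ f ∈ F', ∏ i, psi (f i)
      ≤ ((k:ℝ)^((5/2):ℝ) * (N:ℝ)^(-(5/2):ℝ)) * W f := by
    intro f hf
    obtain ⟨hfF, hfp, hfq⟩ := Finset.mem_filter.mp hf
    have e : ∏ i, psi (f i) = psi (f p) * W f :=
      (Finset.mul_prod_erase Finset.univ (fun i => psi (f i)) (Finset.mem_univ p)).symm
    rw [e]
    apply mul_le_mul_of_nonneg_right _ (hWnonneg f)
    -- psi (f p) ≤ k^{5/2} N^{-5/2}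
    have h1 : (N:ℝ)/(k:ℝ) ≤ (f p : ℝ) + 1 := by
      rw [div_le_iff₀ hkR]
      have : (N:ℝ) ≤ (k:ℝ) * (f p : ℝ) := by exact_mod_cast hfp
      nlinarith
    have h2 : (0:ℝ) < (N:ℝ)/(k:ℝ) := by positivity
    have h3 : psi (f p) ≤ ((N:ℝ)/(k:ℝ)) ^ (-(5/2):ℝ) := by
      rw [psi]
      exact Real.rpow_le_rpow_of_nonpos h2 h1 (by norm_num)
    have h4 : ((N:ℝ)/(k:ℝ)) ^ (-(5/2):ℝ) = (k:ℝ)^((5/2):ℝ) * (N:ℝ)^(-(5/2):ℝ) := by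
      rw [Real.div_rpow (le_of_lt hNR) (le_of_lt hkR), Real.rpow_neg (le_of_lt hkR),
        div_eq_mul_inv, inv_inv]
      ring
    calc psi (f p) ≤ ((N:ℝ)/(k:ℝ)) ^ (-(5/2):ℝ) := h3
      _ = (k:ℝ)^((5/2):ℝ) * (N:ℝ)^(-(5/2):ℝ) := h4
  -- sum of W over F'
  set t : Fin k → Finset ℕ := fun i =>
    if i = p then {0} else (if i = q then (Finset.range (N+1)).filter (fun x => a < x)
      else Finset.range (N+1)) with ht
  set H : Fin k → ℕ → ℝ := fun i x => if i = p then 1 else psi x with hH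
  have hHW : ∀ g : Fin k → ℕ, ∏ i, H i (g i) = W g := by
    intro g
    rw [← Finset.mul_prod_erase Finset.univ (fun i => H i (g i)) (Finset.mem_univ p)]
    have h1 : H p (g p) = 1 := if_pos rfl
    have h2 : ∏ i ∈ Finset.univ.erase p, H i (g i) = W g := by
      apply Finset.prod_congr rfl
      intro i hi
      exact if_neg (Finset.mem_erase.mp hi).1
    rw [h1, h2, one_mul]
  have hWsum : ∑ f ∈ F', W f ≤ 2^k * ((a:ℝ)^(-(3/2):ℝ)) := by
    have hinj : ∀ f ∈ F', ∀ g ∈ F', Function.update f p 0 = Function.update g p 0 → f = g := by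
      intro f hf g hg hupd
      obtain ⟨hfF, -⟩ := Finset.mem_filter.mp hf
      obtain ⟨hgF, -⟩ := Finset.mem_filter.mp hg
      have hfs := (hF f hfF).2
      have hgs := (hF g hgF).2
      have hoff : ∀ i, i ≠ p → f i = g i := by
        intro i hi
        have := congrFun hupd i
        rwa [Function.update_of_ne hi, Function.update_of_ne hi] at this
      have hsum_erase : ∑ i ∈ Finset.univ.erase p, f i = ∑ i ∈ Finset.univ.erase p, g i :=
        Finset.sum_congr rfl fun i hi => hoff i (Finset.mem_erase.mp hi).1
      have hp1 : f p + ∑ i ∈ Finset.univ.erase p, f i = N := by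
        rw [Finset.add_sum_erase Finset.univ f (Finset.mem_univ p)]; exact hfs
      have hp2 : g p + ∑ i ∈ Finset.univ.erase p, g i = N := by
        rw [Finset.add_sum_erase Finset.univ g (Finset.mem_univ p)]; exact hgs
      funext i
      by_cases hip : i = p
      · subst hip; omega
      · exact hoff i hip
    have himg : ∑ f ∈ F', W f = ∑ g ∈ F'.image (fun f => Function.update f p 0), W g := by
      rw [Finset.sum_image hinj]
      apply Finset.sum_congr rfl
      intro f _
      apply Finset.prod_congr rfl
      intro i hi
      rw [Function.update_of_ne (Finset.mem_erase.mp hi).1]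
    have hsub : F'.image (fun f => Function.update f p 0) ⊆ Fintype.piFinset t := by
      intro g hg
      obtain ⟨f, hf, rfl⟩ := Finset.mem_image.mp hg
      obtain ⟨hfF, hfp, hfq⟩ := Finset.mem_filter.mp hf
      have hfr := (hF f hfF).1
      rw [Fintype.mem_piFinset]
      intro i
      by_cases hip : i = p
      · subst hip
        simp [ht, Function.update_self]
      · rw [Function.update_of_ne hip, ht]
        simp only [if_neg hip]
        by_cases hiq : i = q
        · subst hiq
          rw [if_pos rfl, Finset.mem_filter]
          exact ⟨hfr i, hfq⟩
        · rw [if_neg hiq]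
          exact hfr i
    have hGsum : ∑ g ∈ Fintype.piFinset t, W g = ∏ i, ∑ x ∈ t i, H i x := by
      rw [Finset.prod_univ_sum t H]
      exact Finset.sum_congr rfl fun g _ => (hHW g).symm
    have hprodbound : ∏ i, (∑ x ∈ t i, H i x) ≤ 2^k * ((a:ℝ)^(-(3/2):ℝ)) := by
      set S : Fin k → ℝ := fun i => ∑ x ∈ t i, H i x with hS
      have hHn : ∀ i x, 0 ≤ H i x := by
        intro i x
        show (0:ℝ) ≤ if i = p then 1 else psi x
        split
        · norm_num
        · exact le_of_lt (psi_pos x)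
      have hSnonneg : ∀ i, 0 ≤ S i := by
        intro i
        exact Finset.sum_nonneg fun x _ => hHn i x
      have htp : t p = {0} := by
        show (if p = p then ({0}: Finset ℕ) else _) = {0}
        rw [if_pos rfl]
      have htq : t q = (Finset.range (N+1)).filter (fun x => a < x) := by
        show (if q = p then ({0}: Finset ℕ) else if q = q then _ else _) = _
        rw [if_neg (Ne.symm hpq), if_pos rfl]
      have hHne : ∀ i, i ≠ p → ∀ x, H i x = psi x := by
        intro i hi x
        show (if i = p then (1:ℝ) else psi x) = psi x
        rw [if_neg hi]
      have hSp : S p = 1 := by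
        show ∑ x ∈ t p, H p x = 1
        rw [htp, Finset.sum_singleton]
        show (if p = p then (1:ℝ) else psi 0) = 1
        rw [if_pos rfl]
      have hS2 : ∀ i, S i ≤ 2 := by
        intro i
        by_cases hip : i = p
        · rw [hip, hSp]; norm_num
        · have hSi : S i = ∑ x ∈ t i, psi x := by
            show ∑ x ∈ t i, H i x = ∑ x ∈ t i, psi x
            exact Finset.sum_congr rfl fun x _ => hHne i hip x
          rw [hSi]
          have hsub2 : t i ⊆ Finset.range (N+1) := by
            show (if i = p then ({0}: Finset ℕ) else if i = q then _ else _) ⊆ _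
            rw [if_neg hip]
            by_cases hiq : i = q
            · rw [if_pos hiq]; exact Finset.filter_subset _ _
            · rw [if_neg hiq]
          calc ∑ x ∈ t i, psi x ≤ ∑ x ∈ Finset.range (N+1), psi x :=
                Finset.sum_le_sum_of_subset_of_nonneg hsub2
                  (fun x _ _ => le_of_lt (psi_pos x))
            _ ≤ 2 := full_sum N
      have hSq : S q ≤ (2/3) * ((a:ℝ)+1) ^ (-(3/2):ℝ) := by
        have hqp : q ≠ p := Ne.symm hpq
        have hSi : S q = ∑ x ∈ (Finset.range (N+1)).filter (fun x => a < x), psi x := by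
          show ∑ x ∈ t q, H q x = _
          rw [htq]
          exact Finset.sum_congr rfl fun x _ => hHne q hqp x
        rw [hSi]
        exact tail_sum a N
      have haux : ((a:ℝ)+1) ^ (-(3/2):ℝ) ≤ (a:ℝ)^(-(3/2):ℝ) :=
        Real.rpow_le_rpow_of_nonpos haR (by linarith) (by norm_num)
      calc ∏ i, S i = S q * ∏ i ∈ Finset.univ.erase q, S i :=
            (Finset.mul_prod_erase Finset.univ S (Finset.mem_univ q)).symm
        _ ≤ ((2/3) * ((a:ℝ)+1) ^ (-(3/2):ℝ)) * 2^(Finset.univ.erase q).card := by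
            apply mul_le_mul hSq _ (Finset.prod_nonneg fun i _ => hSnonneg i)
              (by positivity)
            calc ∏ i ∈ Finset.univ.erase q, S i ≤ ∏ _i ∈ Finset.univ.erase q, (2:ℝ) :=
                  Finset.prod_le_prod (fun i _ => hSnonneg i) (fun i _ => hS2 i)
              _ = 2^(Finset.univ.erase q).card := Finset.prod_const 2
        _ ≤ 2^k * ((a:ℝ)^(-(3/2):ℝ)) := by
            have hcard : (Finset.univ.erase q).card ≤ k := by
              calc (Finset.univ.erase q).card ≤ Finset.univ.card := Finset.card_erase_le
                _ = k := by simp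
            have hpow : (2:ℝ)^(Finset.univ.erase q).card ≤ 2^k :=
              pow_le_pow_right₀ (by norm_num) hcard
            have hrn : (0:ℝ) ≤ ((a:ℝ)+1) ^ (-(3/2):ℝ) := Real.rpow_nonneg (by positivity) _
            calc ((2/3) * ((a:ℝ)+1) ^ (-(3/2):ℝ)) * 2^(Finset.univ.erase q).card
                ≤ ((a:ℝ)^(-(3/2):ℝ)) * 2^k := by
                  apply mul_le_mul _ hpow (by positivity)
                    (Real.rpow_nonneg (le_of_lt haR) _)
                  calc (2/3) * ((a:ℝ)+1) ^ (-(3/2):ℝ) ≤ 1 * ((a:ℝ)+1) ^ (-(3/2):ℝ) := by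
                        apply mul_le_mul_of_nonneg_right (by norm_num) hrn
                    _ = ((a:ℝ)+1) ^ (-(3/2):ℝ) := one_mul _
                    _ ≤ (a:ℝ)^(-(3/2):ℝ) := haux
              _ = 2^k * ((a:ℝ)^(-(3/2):ℝ)) := by ring
    calc ∑ f ∈ F', W f = ∑ g ∈ F'.image (fun f => Function.update f p 0), W g := himg
      _ ≤ ∑ g ∈ Fintype.piFinset t, W g :=
          Finset.sum_le_sum_of_subset_of_nonneg hsub (fun g _ _ => hWnonneg g)
      _ = ∏ i, ∑ x ∈ t i, H i x := hGsum
      _ ≤ 2^k * ((a:ℝ)^(-(3/2):ℝ)) := hprodbound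
  -- combine
  calc ∑ f ∈ F', ∏ i, psi (f i)
      ≤ ∑ f ∈ F', ((k:ℝ)^((5/2):ℝ) * (N:ℝ)^(-(5/2):ℝ)) * W f := Finset.sum_le_sum hface
    _ = ((k:ℝ)^((5/2):ℝ) * (N:ℝ)^(-(5/2):ℝ)) * ∑ f ∈ F', W f := by rw [Finset.mul_sum]
    _ ≤ ((k:ℝ)^((5/2):ℝ) * (N:ℝ)^(-(5/2):ℝ)) * (2^k * ((a:ℝ)^(-(3/2):ℝ))) := by
        apply mul_le_mul_of_nonneg_left hWsum
        have : (0:ℝ) ≤ (k:ℝ)^((5/2):ℝ) := Real.rpow_nonneg (le_of_lt hkR) _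
        have : (0:ℝ) ≤ (N:ℝ)^(-(5/2):ℝ) := Real.rpow_nonneg (le_of_lt hNR) _
        positivity

/-- for k ≥ 2 disjoint polygons of boundary sizes m₁+2,…,m_k+2,
the number of triangulations with N internal vertices in total such that at least
two polygons each contain more than a internal vertices is at most
C · (27/2)^N · N^{-5/2} · a^{-3/2}. -/
theorem one_big_component (k : ℕ) (hk : 2 ≤ k) (m : Fin k → ℕ) :
    ∃ C : ℝ, 0 < C ∧ ∀ N a : ℕ, 0 < N → 0 < a →
      ∑ f ∈ (Fintype.piFinset (fun _ : Fin k => Finset.range (N + 1))).filter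
          (fun f => (∑ i, f i = N) ∧ ∃ i j, i ≠ j ∧ a < f i ∧ a < f j),
        ∏ i, phi2 (f i) (m i)
        ≤ C * (27 / 2 : ℝ) ^ N * (N : ℝ) ^ (-(5 / 2) : ℝ) * (a : ℝ) ^ (-(3 / 2) : ℝ) := by
  classical
  choose B hBpos hB using fun i : Fin k => phi2_bound (m i)
  set P : ℝ := ∏ i, B i with hP
  have hPpos : 0 < P := Finset.prod_pos fun i _ => hBpos i
  have hkR : (0:ℝ) < (k:ℝ) := by exact_mod_cast (by omega : 0 < k)
  refine ⟨P * (k:ℝ)^2 * ((k:ℝ)^((5/2):ℝ) * 2^k), ?_, ?_⟩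
  · have : (0:ℝ) < (k:ℝ)^((5/2):ℝ) := Real.rpow_pos_of_pos hkR _
    positivity
  intro N a hN ha
  set F := (Fintype.piFinset (fun _ : Fin k => Finset.range (N + 1))).filter
      (fun f => (∑ i, f i = N) ∧ ∃ i j, i ≠ j ∧ a < f i ∧ a < f j) with hFdef
  set pairs := (Finset.univ : Finset (Fin k × Fin k)).filter (fun pq => pq.1 ≠ pq.2) with hpairs
  have hNR : (0:ℝ) < (N:ℝ) := by exact_mod_cast hN
  have haR : (0:ℝ) < (a:ℝ) := by exact_mod_cast ha
  -- Step A : per-tuple bound by psi products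
  have stepA : ∀ f ∈ F, ∏ i, phi2 (f i) (m i) ≤ P * (27/2:ℝ)^N * ∏ i, psi (f i) := by
    intro f hf
    obtain ⟨-, hsum, -⟩ :
        f ∈ Fintype.piFinset (fun _ : Fin k => Finset.range (N + 1)) ∧
          (∑ i, f i = N) ∧ ∃ i j, i ≠ j ∧ a < f i ∧ a < f j := by
      simpa [hFdef] using hf
    calc ∏ i, phi2 (f i) (m i) ≤ ∏ i, (B i * (27/2:ℝ)^(f i) * psi (f i)) := by
          apply Finset.prod_le_prod (fun i _ => phi2_nonneg _ _) (fun i _ => hB i (f i))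
      _ = (∏ i, B i) * (∏ i, (27/2:ℝ)^(f i)) * (∏ i, psi (f i)) := by
          rw [Finset.prod_mul_distrib, Finset.prod_mul_distrib]
      _ = P * (27/2:ℝ)^N * ∏ i, psi (f i) := by
          rw [Finset.prod_pow_eq_pow_sum, hsum]
  -- Step B : domination by sum over pairs
  have stepB : ∀ f ∈ F, ∏ i, psi (f i) ≤
      ∑ pq ∈ pairs, (if N ≤ k * f pq.1 ∧ a < f pq.2 then ∏ i, psi (f i) else 0) := by
    intro f hf
    obtain ⟨-, hsum, i, j, hij, hi, hj⟩ :
        f ∈ Fintype.piFinset (fun _ : Fin k => Finset.range (N + 1)) ∧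
          (∑ i, f i = N) ∧ ∃ i j, i ≠ j ∧ a < f i ∧ a < f j := by
      simpa [hFdef] using hf
    have hne : (Finset.univ : Finset (Fin k)).Nonempty := ⟨⟨0, by omega⟩, Finset.mem_univ _⟩
    obtain ⟨p, -, hp⟩ := Finset.exists_max_image Finset.univ f hne
    have hNp : N ≤ k * f p := by
      have h1 : ∑ i, f i ≤ (Finset.univ : Finset (Fin k)).card * f p := by
        calc ∑ i, f i ≤ ∑ _i : Fin k, f p :=
              Finset.sum_le_sum fun i _ => hp i (Finset.mem_univ i)
          _ = (Finset.univ : Finset (Fin k)).card * f p := by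
              rw [Finset.sum_const, smul_eq_mul]
      rw [← hsum]
      simpa using h1
    -- choose q
    obtain ⟨q, hqp, hq⟩ : ∃ q, q ≠ p ∧ a < f q := by
      by_cases hip : i = p
      · exact ⟨j, by rw [← hip]; exact hij.symm, hj⟩
      · exact ⟨i, hip, hi⟩
    have hmem : (p, q) ∈ pairs := by
      rw [hpairs, Finset.mem_filter]
      exact ⟨Finset.mem_univ _, Ne.symm hqp⟩
    have hval : (if N ≤ k * f (p,q).1 ∧ a < f (p,q).2 then ∏ i, psi (f i) else 0)
        = ∏ i, psi (f i) := if_pos ⟨hNp, hq⟩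
    calc ∏ i, psi (f i)
        = (if N ≤ k * f (p,q).1 ∧ a < f (p,q).2 then ∏ i, psi (f i) else 0) := hval.symm
      _ ≤ ∑ pq ∈ pairs, (if N ≤ k * f pq.1 ∧ a < f pq.2 then ∏ i, psi (f i) else 0) := by
          apply Finset.single_le_sum
            (f := fun pq => if N ≤ k * f pq.1 ∧ a < f pq.2 then ∏ i, psi (f i) else 0) _ hmem
          intro pq _
          show (0:ℝ) ≤ if N ≤ k * f pq.1 ∧ a < f pq.2 then ∏ i, psi (f i) else 0
          split
          · exact Finset.prod_nonneg fun i _ => le_of_lt (psi_pos _)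
          · exact le_refl 0
  -- per-pair bound
  have stepD : ∀ pq ∈ pairs,
      ∑ f ∈ F, (if N ≤ k * f pq.1 ∧ a < f pq.2 then ∏ i, psi (f i) else 0)
        ≤ ((k:ℝ)^((5/2):ℝ) * (N:ℝ)^(-(5/2):ℝ)) * (2^k * ((a:ℝ)^(-(3/2):ℝ))) := by
    intro pq hpq
    have hne : pq.1 ≠ pq.2 := (Finset.mem_filter.mp hpq).2
    rw [← Finset.sum_filter]
    apply pair_sum_bound k hk N a hN ha pq.1 pq.2 hne F
    intro f hf
    obtain ⟨hmem, hsum, -⟩ :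
        f ∈ Fintype.piFinset (fun _ : Fin k => Finset.range (N + 1)) ∧
          (∑ i, f i = N) ∧ ∃ i j, i ≠ j ∧ a < f i ∧ a < f j := by
      simpa [hFdef] using hf
    exact ⟨fun i => by simpa using (Fintype.mem_piFinset.mp hmem) i, hsum⟩
  -- assemble
  have hcard : ((pairs.card : ℝ)) ≤ (k:ℝ)^2 := by
    have h1 : pairs.card ≤ (Finset.univ : Finset (Fin k × Fin k)).card :=
      Finset.card_filter_le _ _
    have h2 : (Finset.univ : Finset (Fin k × Fin k)).card = k * k := by simp
    have : pairs.card ≤ k * k := by omega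
    calc ((pairs.card : ℝ)) ≤ ((k*k : ℕ) : ℝ) := by exact_mod_cast this
      _ = (k:ℝ)^2 := by push_cast; ring
  have hpairbound : (0:ℝ) ≤ ((k:ℝ)^((5/2):ℝ) * (N:ℝ)^(-(5/2):ℝ)) * (2^k * ((a:ℝ)^(-(3/2):ℝ))) := by
    have h1 : (0:ℝ) ≤ (k:ℝ)^((5/2):ℝ) := Real.rpow_nonneg (le_of_lt hkR) _
    have h2 : (0:ℝ) ≤ (N:ℝ)^(-(5/2):ℝ) := Real.rpow_nonneg (le_of_lt hNR) _
    have h3 : (0:ℝ) ≤ (a:ℝ)^(-(3/2):ℝ) := Real.rpow_nonneg (le_of_lt haR) _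
    positivity
  calc ∑ f ∈ F, ∏ i, phi2 (f i) (m i)
      ≤ ∑ f ∈ F, P * (27/2:ℝ)^N * ∏ i, psi (f i) := Finset.sum_le_sum stepA
    _ = P * (27/2:ℝ)^N * ∑ f ∈ F, ∏ i, psi (f i) := by rw [Finset.mul_sum]
    _ ≤ P * (27/2:ℝ)^N * ∑ f ∈ F, ∑ pq ∈ pairs,
          (if N ≤ k * f pq.1 ∧ a < f pq.2 then ∏ i, psi (f i) else 0) := by
        apply mul_le_mul_of_nonneg_left (Finset.sum_le_sum stepB) (by positivity)
    _ = P * (27/2:ℝ)^N * ∑ pq ∈ pairs, ∑ f ∈ F,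
          (if N ≤ k * f pq.1 ∧ a < f pq.2 then ∏ i, psi (f i) else 0) := by
        rw [Finset.sum_comm]
    _ ≤ P * (27/2:ℝ)^N * (pairs.card *
          (((k:ℝ)^((5/2):ℝ) * (N:ℝ)^(-(5/2):ℝ)) * (2^k * ((a:ℝ)^(-(3/2):ℝ))))) := by
        apply mul_le_mul_of_nonneg_left _ (by positivity)
        have := Finset.sum_le_card_nsmul pairs _ _ stepD
        simpa [nsmul_eq_mul] using this
    _ ≤ P * (27/2:ℝ)^N * ((k:ℝ)^2 *
          (((k:ℝ)^((5/2):ℝ) * (N:ℝ)^(-(5/2):ℝ)) * (2^k * ((a:ℝ)^(-(3/2):ℝ))))) := by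
        apply mul_le_mul_of_nonneg_left
          (mul_le_mul_of_nonneg_right hcard hpairbound) (by positivity)
    _ = P * (k:ℝ)^2 * ((k:ℝ)^((5/2):ℝ) * 2^k) * (27/2:ℝ)^N
          * (N:ℝ)^(-(5/2):ℝ) * (a:ℝ)^(-(3/2):ℝ) := by ring
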